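/- Let f : ℂ → ℂ be meromorphic on all of ℂ (MeromorphicOn f Set.univ) and suppose that the function z ↦ f(z⁻¹) is meromorphic at 0. Then the set {z ∈ ℂ : ¬ AnalyticAt ℂ f z} of points where f fails to be analytic is finite; that is, a function meromorphic on the extended complex plane has only finitely many poles. -/

import Mathlib

/-- A function meromorphic on the extended complex plane
(i.e. meromorphic on all of `ℂ` and such that `z ↦ f z⁻¹` is meromorphic at `0`)
fails to be analytic at only finitely many points: it has only finitely many poles. -/
theorem finitely_many_poles_of_meromorphic_on_extended_plane
    (f : ℂ → ℂ) (h1 : MeromorphicOn f Set.univ)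
    (h2 : MeromorphicAt (fun z : ℂ => f z⁻¹) 0) :
    {z : ℂ | ¬ AnalyticAt ℂ f z}.Finite := by
  set S : Set ℂ := {z : ℂ | ¬ AnalyticAt ℂ f z} with hS
  -- near 0, z ↦ f z⁻¹ is analytic away from 0
  have hev := h2.eventually_analyticAt
  rw [eventually_nhdsWithin_iff, Metric.eventually_nhds_iff] at hev
  obtain ⟨ε, hε, hball⟩ := hev
  -- f is analytic at every w with ‖w‖ > ε⁻¹
  have hbig : ∀ w : ℂ, ε⁻¹ < ‖w‖ → AnalyticAt ℂ f w := by
    intro w hw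
    have hw0 : w ≠ 0 := by
      rintro rfl; simp at hw
      linarith
    have hwinv : ‖w⁻¹‖ < ε := by
      rw [norm_inv]
      rw [inv_lt_comm₀ (norm_pos_iff.2 hw0) hε]
      exact hw
    have hg : AnalyticAt ℂ (fun z : ℂ => f z⁻¹) w⁻¹ := by
      apply hball (by simpa using hwinv) (inv_ne_zero hw0)
    have hinv : AnalyticAt ℂ (fun z : ℂ => z⁻¹) w := analyticAt_inv hw0
    have hcomp : AnalyticAt ℂ ((fun z : ℂ => f z⁻¹) ∘ (fun z : ℂ => z⁻¹)) w :=
      hg.comp hinv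
    apply hcomp.congr
    filter_upwards [eventually_ne_nhds hw0] with z hz
    simp [Function.comp, inv_inv]
  -- S is bounded
  have hsub : S ⊆ Metric.closedBall 0 ε⁻¹ := by
    intro z hz
    simp only [Metric.mem_closedBall, dist_zero_right]
    by_contra hc
    exact hz (hbig z (lt_of_not_ge hc))
  -- S is closed
  have hclosed : IsClosed S := by
    rw [← isOpen_compl_iff]
    rw [isOpen_iff_mem_nhds]
    intro z hz
    simp only [Set.mem_compl_iff, hS, Set.mem_setOf_eq, not_not] at hz
    filter_upwards [hz.eventually_analyticAt] with w hw
    simp only [Set.mem_compl_iff, hS, Set.mem_setOf_eq, not_not]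
    exact hw
  have hcompact : IsCompact S :=
    (isCompact_closedBall (0 : ℂ) ε⁻¹).of_isClosed_subset hclosed hsub
  -- S is discrete
  have hdisc : DiscreteTopology S := by
    rw [discreteTopology_subtype_iff]
    intro x hx
    have := (h1 x (Set.mem_univ x)).eventually_analyticAt
    rw [Filter.eventually_iff, mem_nhdsWithin_iff_exists_mem_nhds_inter] at this
    obtain ⟨U, hU, hUsub⟩ := this
    rw [← Filter.empty_mem_iff_bot]
    rw [Filter.mem_inf_iff]
    refine ⟨U \ {x}, ?_, S, Filter.mem_principal_self _, ?_⟩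
    · exact diff_mem_nhdsWithin_compl hU {x}
    · ext z
      simp only [Set.mem_inter_iff, Set.mem_diff, Set.mem_singleton_iff,
        Set.mem_empty_iff_false, false_iff, hS, Set.mem_setOf_eq]
      rintro ⟨⟨hzU, hzx⟩, hzS⟩
      exact hzS (hUsub ⟨hzU, hzx⟩)
  exact hcompact.finite ⟨hdisc⟩
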